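/- arXiv:1205.1595 — 4 statements merged into one kernel-verified Lean document; each statement's English description precedes it below -/
import Mathlib

section
/- For every β > 0, the log-Laplace transform of f − E[f] satisfies the identity ln E[exp(β(f − E[f]))] = β ∫₀^β S_f(γ)/γ² dγ, where the integrand S_f(γ)/γ² is extended continuously to γ = 0. -/
open MeasureTheory Real

/-- Thermal expectation `E_{βf}[g] = E[g e^{βf}] / E[e^{βf}]`. -/
noncomputable def thermalExp {Ω : Type*} [MeasurableSpace Ω] (μ : Measure Ω)
    (β : ℝ) (f g : Ω → ℝ) : ℝ :=
  (∫ x, g x * Real.exp (β * f x) ∂μ) / ∫ x, Real.exp (β * f x) ∂μ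

/-- Canonical entropy `S_f(β) = β E_{βf}[f] − ln Z_{βf}`. -/
noncomputable def canEntropy {Ω : Type*} [MeasurableSpace Ω] (μ : Measure Ω)
    (f : Ω → ℝ) (β : ℝ) : ℝ :=
  β * thermalExp μ β f f - Real.log (∫ x, Real.exp (β * f x) ∂μ)

/-- Bounded measurable functions are integrable on a finite measure space. -/
lemma aux_integrable {Ω : Type*} [MeasurableSpace Ω] (μ : Measure Ω) [IsFiniteMeasure μ]
    {g : Ω → ℝ} (hg : Measurable g) {D : ℝ} (hD : ∀ x, |g x| ≤ D) : Integrable g μ :=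
  ⟨hg.aestronglyMeasurable,
    HasFiniteIntegral.of_bounded (C := D) (ae_of_all _ (by simpa [Real.norm_eq_abs] using hD))⟩

/-- Differentiation under the integral sign for `t ↦ ∫ g e^{t f}` with `f, g` bounded. -/
lemma aux_hasDerivAt {Ω : Type*} [MeasurableSpace Ω] (μ : Measure Ω) [IsProbabilityMeasure μ]
    {f : Ω → ℝ} (hf : Measurable f) {C : ℝ} (hC : ∀ x, |f x| ≤ C)
    {g : Ω → ℝ} (hg : Measurable g) {D : ℝ} (hD : ∀ x, |g x| ≤ D) (γ : ℝ) :
    HasDerivAt (fun t => ∫ x, g x * Real.exp (t * f x) ∂μ)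
      (∫ x, g x * f x * Real.exp (γ * f x) ∂μ) γ := by
  have hne : Nonempty Ω := by
    by_contra h
    have h1 : μ Set.univ = 1 := measure_univ
    rw [Set.univ_eq_empty_iff.2 (not_nonempty_iff.1 h), measure_empty] at h1
    exact zero_ne_one h1
  have hC0 : 0 ≤ C := (abs_nonneg _).trans (hC (Classical.arbitrary Ω))
  have hD0 : 0 ≤ D := (abs_nonneg _).trans (hD (Classical.arbitrary Ω))
  have hexp_le : ∀ (t : ℝ) (x : Ω), Real.exp (t * f x) ≤ Real.exp (|t| * C) := by
    intro t x
    apply Real.exp_le_exp.2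
    calc t * f x ≤ |t * f x| := le_abs_self _
    _ = |t| * |f x| := abs_mul _ _
    _ ≤ |t| * C := by
        exact mul_le_mul_of_nonneg_left (hC x) (abs_nonneg t)
  have hmeas : ∀ t : ℝ, Measurable fun x => g x * Real.exp (t * f x) := fun t =>
    hg.mul (Real.measurable_exp.comp (hf.const_mul t))
  have hmeas' : ∀ t : ℝ, Measurable fun x => g x * f x * Real.exp (t * f x) := fun t =>
    (hg.mul hf).mul (Real.measurable_exp.comp (hf.const_mul t))
  have key := hasDerivAt_integral_of_dominated_loc_of_deriv_le (μ := μ)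
    (F := fun t x => g x * Real.exp (t * f x))
    (F' := fun t x => g x * f x * Real.exp (t * f x))
    (x₀ := γ) (s := Metric.ball γ 1) (bound := fun _ => D * C * Real.exp ((|γ| + 1) * C))
    (Metric.ball_mem_nhds γ one_pos)
    (Filter.Eventually.of_forall fun t => (hmeas t).aestronglyMeasurable)
    (aux_integrable μ (hmeas γ) (D := D * Real.exp (|γ| * C)) (fun x => by
      rw [abs_mul, abs_of_pos (Real.exp_pos _)]
      exact mul_le_mul (hD x) (hexp_le γ x) (Real.exp_pos _).le hD0))
    ((hmeas' γ).aestronglyMeasurable)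
    (ae_of_all _ fun x t ht => by
      have htle : |t| ≤ |γ| + 1 := by
        have := Metric.mem_ball.1 ht
        rw [Real.dist_eq] at this
        calc |t| = |γ + (t - γ)| := by ring_nf
        _ ≤ |γ| + |t - γ| := abs_add_le _ _
        _ ≤ |γ| + 1 := by linarith
      have h1 : Real.exp (t * f x) ≤ Real.exp ((|γ| + 1) * C) :=
        (hexp_le t x).trans (Real.exp_le_exp.2 (mul_le_mul_of_nonneg_right htle hC0))
      rw [Real.norm_eq_abs, abs_mul, abs_of_pos (Real.exp_pos _), abs_mul]
      exact mul_le_mul (mul_le_mul (hD x) (hC x) (abs_nonneg _) hD0)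
        h1 (Real.exp_pos _).le (by positivity))
    (integrable_const _)
    (ae_of_all _ fun x t _ => by
      have h1 : HasDerivAt (fun s : ℝ => s * f x) (f x) t := hasDerivAt_mul_const (f x)
      have h2 := (h1.exp).const_mul (g x)
      refine HasDerivAt.congr_deriv h2 ?_
      ring)
  exact key.2

theorem stmt_0 {Ω : Type*} [MeasurableSpace Ω] (μ : Measure Ω) [IsProbabilityMeasure μ]
    (f : Ω → ℝ) (hf : Measurable f) (C : ℝ) (hC : ∀ x, |f x| ≤ C)
    (β : ℝ) (hβ : 0 < β) :
    Real.log (∫ x, Real.exp (β * (f x - ∫ y, f y ∂μ)) ∂μ)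
      = β * ∫ γ in (0:ℝ)..β, canEntropy μ f γ / γ ^ 2 := by
  -- Replace C by |C| so that the bound is nonnegative
  have hC' : ∀ x, |f x| ≤ |C| := fun x => (hC x).trans (le_abs_self C)
  set c : ℝ := |C| with hcdef
  have hc0 : 0 ≤ c := abs_nonneg C
  clear hC
  -- Basic functions
  set Z : ℝ → ℝ := fun γ => ∫ x, Real.exp (γ * f x) ∂μ with hZdef
  set M1 : ℝ → ℝ := fun γ => ∫ x, f x * Real.exp (γ * f x) ∂μ with hM1def
  set M2 : ℝ → ℝ := fun γ => ∫ x, f x * f x * Real.exp (γ * f x) ∂μ with hM2def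
  have hexp_le : ∀ (t : ℝ) (x : Ω), Real.exp (t * f x) ≤ Real.exp (|t| * c) := by
    intro t x
    apply Real.exp_le_exp.2
    calc t * f x ≤ |t * f x| := le_abs_self _
    _ = |t| * |f x| := abs_mul _ _
    _ ≤ |t| * c := mul_le_mul_of_nonneg_left (hC' x) (abs_nonneg t)
  have hexp_ge : ∀ (t : ℝ) (x : Ω), Real.exp (-(|t| * c)) ≤ Real.exp (t * f x) := by
    intro t x
    apply Real.exp_le_exp.2
    have : |t * f x| ≤ |t| * c := by
      rw [abs_mul]; exact mul_le_mul_of_nonneg_left (hC' x) (abs_nonneg t)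
    linarith [neg_abs_le (t * f x)]
  have hmeasE : ∀ t : ℝ, Measurable fun x => Real.exp (t * f x) := fun t =>
    Real.measurable_exp.comp (hf.const_mul t)
  have hintE : ∀ t : ℝ, Integrable (fun x => Real.exp (t * f x)) μ := fun t =>
    aux_integrable μ (hmeasE t) (D := Real.exp (|t| * c)) (fun x => by
      rw [abs_of_pos (Real.exp_pos _)]; exact hexp_le t x)
  -- positivity of Z
  have hZpos : ∀ γ, 0 < Z γ := by
    intro γ
    have h1 : Real.exp (-(|γ| * c)) ≤ Z γ := by
      have := integral_mono (integrable_const (Real.exp (-(|γ| * c)))) (hintE γ)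
        (fun x => hexp_ge γ x)
      simpa using this
    exact lt_of_lt_of_le (Real.exp_pos _) h1
  have hZne : ∀ γ, Z γ ≠ 0 := fun γ => (hZpos γ).ne'
  -- derivatives
  have hZd : ∀ γ, HasDerivAt Z (M1 γ) γ := by
    intro γ
    have := aux_hasDerivAt μ hf hC' (g := fun _ => 1) measurable_const
      (D := 1) (fun x => by norm_num) γ
    simpa using this
  have hM1d : ∀ γ, HasDerivAt M1 (M2 γ) γ :=
    fun γ => aux_hasDerivAt μ hf hC' hf hC' γ
  have hM2d : ∀ γ, HasDerivAt M2 (∫ x, f x * f x * f x * Real.exp (γ * f x) ∂μ) γ := by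
    intro γ
    have := aux_hasDerivAt μ hf hC' (g := fun x => f x * f x) (hf.mul hf)
      (D := c * c) (fun x => by
        rw [abs_mul]
        exact mul_le_mul (hC' x) (hC' x) (abs_nonneg _) hc0) γ
    convert this using 2
  -- continuity
  have hZc : Continuous Z := by
    rw [continuous_iff_continuousAt]; exact fun γ => (hZd γ).continuousAt
  have hM1c : Continuous M1 := by
    rw [continuous_iff_continuousAt]; exact fun γ => (hM1d γ).continuousAt
  have hM2c : Continuous M2 := by
    rw [continuous_iff_continuousAt]; exact fun γ => (hM2d γ).continuousAt
  -- log partition function and its derivative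
  set φ : ℝ → ℝ := fun γ => Real.log (Z γ) with hφdef
  set p : ℝ → ℝ := fun γ => M1 γ / Z γ with hpdef
  set q : ℝ → ℝ := fun γ => M2 γ / Z γ - (p γ) ^ 2 with hqdef
  have hφd : ∀ γ, HasDerivAt φ (p γ) γ := fun γ => (hZd γ).log (hZne γ)
  have hpd : ∀ γ, HasDerivAt p (q γ) γ := by
    intro γ
    have := (hM1d γ).div (hZd γ) (hZne γ)
    refine HasDerivAt.congr_deriv this ?_
    have h0 := hZne γ
    rw [hqdef, hpdef]
    field_simp
  have hpc : Continuous p := hM1c.div hZc hZne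
  have hqc : Continuous q := (hM2c.div hZc hZne).sub (hpc.pow 2)
  -- entropy
  set S : ℝ → ℝ := fun γ => γ * p γ - φ γ with hSdef
  have hcan : ∀ γ, canEntropy μ f γ = S γ := fun γ => rfl
  have hSd : ∀ γ, HasDerivAt S (γ * q γ) γ := by
    intro γ
    have := ((hasDerivAt_id γ).mul (hpd γ)).sub (hφd γ)
    refine HasDerivAt.congr_deriv this ?_
    simp only [id_eq]
    ring
  have hSc : Continuous S := by
    rw [continuous_iff_continuousAt]; exact fun γ => (hSd γ).continuousAt
  -- bounds on p and q
  have habs_int : ∀ (t : ℝ) (g : Ω → ℝ), Measurable g → (∀ x, |g x| ≤ c * c) →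
      |∫ x, g x * Real.exp (t * f x) ∂μ| ≤ c * c * Z t := by
    intro t g hg hgb
    calc |∫ x, g x * Real.exp (t * f x) ∂μ| ≤ ∫ x, |g x| * Real.exp (t * f x) ∂μ := by
          simpa [Real.norm_eq_abs, abs_mul, abs_of_pos (Real.exp_pos _)] using
            norm_integral_le_integral_norm (fun x => g x * Real.exp (t * f x)) (μ := μ)
    _ ≤ ∫ x, c * c * Real.exp (t * f x) ∂μ := by
          apply integral_mono
          · exact aux_integrable μ (hg.abs.mul (hmeasE t))
              (D := c * c * Real.exp (|t| * c)) (fun x => by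
                rw [abs_mul, abs_abs, abs_of_pos (Real.exp_pos _)]
                exact mul_le_mul (hgb x) (hexp_le t x) (Real.exp_pos _).le
                  (by positivity))
          · exact (hintE t).const_mul _
          · intro x
            exact mul_le_mul_of_nonneg_right (hgb x) (Real.exp_pos _).le
    _ = c * c * Z t := by rw [integral_const_mul]
  have hM1b : ∀ t, |M1 t| ≤ c * Z t := by
    intro t
    calc |M1 t| ≤ ∫ x, |f x| * Real.exp (t * f x) ∂μ := by
          simpa [Real.norm_eq_abs, abs_mul, abs_of_pos (Real.exp_pos _)] using
            norm_integral_le_integral_norm (fun x => f x * Real.exp (t * f x)) (μ := μ)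
    _ ≤ ∫ x, c * Real.exp (t * f x) ∂μ := by
          apply integral_mono
          · exact aux_integrable μ (hf.abs.mul (hmeasE t))
              (D := c * Real.exp (|t| * c)) (fun x => by
                rw [abs_mul, abs_abs, abs_of_pos (Real.exp_pos _)]
                exact mul_le_mul (hC' x) (hexp_le t x) (Real.exp_pos _).le hc0)
          · exact (hintE t).const_mul _
          · intro x
            exact mul_le_mul_of_nonneg_right (hC' x) (Real.exp_pos _).le
    _ = c * Z t := by rw [integral_const_mul]
  have hM2b : ∀ t, |M2 t| ≤ c * c * Z t := fun t =>
    habs_int t (fun x => f x * f x) (hf.mul hf) (fun x => by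
      rw [abs_mul]; exact mul_le_mul (hC' x) (hC' x) (abs_nonneg _) hc0)
  have hpb : ∀ t, |p t| ≤ c := by
    intro t
    simp only [hpdef]
    rw [abs_div, abs_of_pos (hZpos t), div_le_iff₀ (hZpos t)]
    exact hM1b t
  have hqb : ∀ t, |q t| ≤ 2 * c ^ 2 := by
    intro t
    have h1 : |M2 t / Z t| ≤ c ^ 2 := by
      rw [abs_div, abs_of_pos (hZpos t), div_le_iff₀ (hZpos t)]
      calc |M2 t| ≤ c * c * Z t := hM2b t
      _ = c ^ 2 * Z t := by ring
    have h2 : |(p t) ^ 2| ≤ c ^ 2 := by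
      rw [abs_pow]
      exact pow_le_pow_left₀ (abs_nonneg _) (hpb t) 2
    calc |q t| ≤ |M2 t / Z t| + |(p t) ^ 2| := abs_sub _ _
    _ ≤ 2 * c ^ 2 := by linarith
  -- S vanishes at 0 and satisfies the quadratic bound
  have hZ0 : Z 0 = 1 := by
    simp only [hZdef]
    simp
  have hφ0 : φ 0 = 0 := by simp only [hφdef]; rw [hZ0, Real.log_one]
  have hS0 : S 0 = 0 := by simp only [hSdef]; simp [hφ0]
  have hSb : ∀ γ, 0 ≤ γ → |S γ| ≤ 2 * c ^ 2 * γ ^ 2 := by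
    intro γ hγ
    have hftc : ∫ s in (0:ℝ)..γ, s * q s = S γ - S 0 :=
      intervalIntegral.integral_eq_sub_of_hasDerivAt
        (fun s _ => hSd s) ((continuous_id.mul hqc).intervalIntegrable 0 γ)
    have hb : ‖∫ s in (0:ℝ)..γ, s * q s‖ ≤ γ * (2 * c ^ 2) * |γ - 0| := by
      apply intervalIntegral.norm_integral_le_of_norm_le_const
      intro s hs
      rw [Set.uIoc_of_le hγ] at hs
      rw [Real.norm_eq_abs, abs_mul]
      have hs1 : |s| ≤ γ := by rw [abs_of_pos hs.1]; exact hs.2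
      exact mul_le_mul hs1 (hqb s) (abs_nonneg _) hγ
    rw [Real.norm_eq_abs, hftc, hS0, sub_zero] at hb
    calc |S γ| ≤ γ * (2 * c ^ 2) * |γ - 0| := hb
    _ = 2 * c ^ 2 * γ ^ 2 := by rw [sub_zero, abs_of_nonneg hγ]; ring
  -- the integrand
  set h : ℝ → ℝ := fun γ => S γ / γ ^ 2 with hhdef
  have hhb : ∀ γ, 0 < γ → |h γ| ≤ 2 * c ^ 2 := by
    intro γ hγ
    simp only [hhdef]
    rw [abs_div, abs_of_pos (by positivity : (0:ℝ) < γ ^ 2), div_le_iff₀ (by positivity)]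
    exact hSb γ hγ.le
  have hhmeas : Measurable h := hSc.measurable.div (measurable_id.pow_const 2)
  -- interval integrability of h on [0, β]
  have hhint : IntervalIntegrable h volume 0 β := by
    rw [intervalIntegrable_iff_integrableOn_Ioc_of_le hβ.le]
    apply Integrable.mono' (integrable_const (2 * c ^ 2))
      hhmeas.aestronglyMeasurable.restrict
    rw [ae_restrict_iff' measurableSet_Ioc]
    exact ae_of_all _ fun γ hγ => by
      rw [Real.norm_eq_abs]; exact hhb γ hγ.1
  -- FTC on [ε, β]
  have hFTC : ∀ ε, 0 < ε → ε ≤ β →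
      ∫ γ in ε..β, h γ = φ β / β - φ ε / ε := by
    intro ε hε hεβ
    apply intervalIntegral.integral_eq_sub_of_hasDerivAt
    · intro γ hγ
      rw [Set.uIcc_of_le hεβ] at hγ
      have hγ0 : γ ≠ 0 := by
        have := hγ.1; intro hh; rw [hh] at this; linarith
      have := (hφd γ).div (hasDerivAt_id γ) hγ0
      refine HasDerivAt.congr_deriv this ?_
      simp only [hhdef, hSdef, id_eq]
      field_simp
    · exact hhint.mono_set (Set.uIcc_subset_uIcc
        (by rw [Set.uIcc_of_le hβ.le]; exact ⟨hε.le, hεβ⟩)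
        (by rw [Set.uIcc_of_le hβ.le]; exact ⟨hβ.le, le_refl β⟩))
  -- splitting
  have hsplit : ∀ ε, 0 < ε → ε ≤ β →
      ∫ γ in ε..β, h γ = (∫ γ in (0:ℝ)..β, h γ) - ∫ γ in (0:ℝ)..ε, h γ := by
    intro ε hε hεβ
    have h1 : IntervalIntegrable h volume 0 ε := hhint.mono_set
      (Set.uIcc_subset_uIcc
        (by rw [Set.uIcc_of_le hβ.le]; exact ⟨le_refl 0, hβ.le⟩)
        (by rw [Set.uIcc_of_le hβ.le]; exact ⟨hε.le, hεβ⟩))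
    have h2 : IntervalIntegrable h volume ε β := hhint.mono_set
      (Set.uIcc_subset_uIcc
        (by rw [Set.uIcc_of_le hβ.le]; exact ⟨hε.le, hεβ⟩)
        (by rw [Set.uIcc_of_le hβ.le]; exact ⟨hβ.le, le_refl β⟩))
    have := intervalIntegral.integral_add_adjacent_intervals h1 h2
    linarith
  -- limit of the short integral
  have hlim0 : Filter.Tendsto (fun ε => ∫ γ in (0:ℝ)..ε, h γ)
      (nhdsWithin 0 (Set.Ioi 0)) (nhds 0) := by
    apply squeeze_zero_norm'
    · filter_upwards [Ioc_mem_nhdsGT_of_mem (Set.mem_Ico.2 ⟨le_refl 0, hβ⟩)] with ε hε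
      have : ‖∫ γ in (0:ℝ)..ε, h γ‖ ≤ 2 * c ^ 2 * |ε - 0| := by
        apply intervalIntegral.norm_integral_le_of_norm_le_const
        intro s hs
        rw [Set.uIoc_of_le hε.1.le] at hs
        rw [Real.norm_eq_abs]
        exact hhb s hs.1
      calc ‖∫ γ in (0:ℝ)..ε, h γ‖ ≤ 2 * c ^ 2 * |ε - 0| := this
      _ = 2 * c ^ 2 * ε := by rw [sub_zero, abs_of_pos hε.1]
    · have : Filter.Tendsto (fun ε : ℝ => 2 * c ^ 2 * ε) (nhds 0) (nhds (2 * c ^ 2 * 0)) :=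
        (continuous_const.mul continuous_id).tendsto 0
      rw [mul_zero] at this
      exact this.mono_left nhdsWithin_le_nhds
  -- limit of φ ε / ε
  have hslope : Filter.Tendsto (fun ε => φ ε / ε) (nhdsWithin 0 (Set.Ioi 0))
      (nhds (∫ y, f y ∂μ)) := by
    have hp0 : p 0 = ∫ y, f y ∂μ := by
      simp only [hpdef, hM1def]
      rw [hZ0]
      simp
    have := (hasDerivAt_iff_tendsto_slope.1 (hφd 0))
    rw [hp0] at this
    have h2 := this.mono_left (nhdsWithin_mono 0 (fun x hx => by
      simp only [Set.mem_compl_iff, Set.mem_singleton_iff]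
      exact ne_of_gt hx))
    apply h2.congr'
    filter_upwards [self_mem_nhdsWithin] with ε hε
    rw [slope_def_field, hφ0]
    ring_nf
  -- combine limits
  have hkey : ∫ γ in (0:ℝ)..β, h γ = φ β / β - ∫ y, f y ∂μ := by
    have hmem : Set.Ioc (0:ℝ) β ∈ nhdsWithin (0:ℝ) (Set.Ioi 0) :=
      Ioc_mem_nhdsGT_of_mem (Set.mem_Ico.2 ⟨le_refl 0, hβ⟩)
    have hT1 : Filter.Tendsto (fun ε => ∫ γ in ε..β, h γ) (nhdsWithin 0 (Set.Ioi 0))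
        (nhds ((∫ γ in (0:ℝ)..β, h γ) - 0)) := by
      apply Filter.Tendsto.congr' _ ((tendsto_const_nhds).sub hlim0)
      filter_upwards [hmem] with ε hε
      exact (hsplit ε hε.1 hε.2).symm
    have hT2 : Filter.Tendsto (fun ε => ∫ γ in ε..β, h γ) (nhdsWithin 0 (Set.Ioi 0))
        (nhds (φ β / β - ∫ y, f y ∂μ)) := by
      apply Filter.Tendsto.congr' _ ((tendsto_const_nhds).sub hslope)
      filter_upwards [hmem] with ε hε
      exact (hFTC ε hε.1 hε.2).symm
    have := tendsto_nhds_unique hT1 hT2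
    rw [sub_zero] at this
    exact this
  -- final computation
  have hLHS : Real.log (∫ x, Real.exp (β * (f x - ∫ y, f y ∂μ)) ∂μ)
      = φ β - β * ∫ y, f y ∂μ := by
    have h1 : (fun x => Real.exp (β * (f x - ∫ y, f y ∂μ)))
        = fun x => Real.exp (β * f x) / Real.exp (β * ∫ y, f y ∂μ) := by
      funext x
      rw [← Real.exp_sub]
      ring_nf
    rw [h1, integral_div, Real.log_div (hZne β) (Real.exp_ne_zero _), Real.log_exp]
  rw [hLHS]
  have : (fun γ => canEntropy μ f γ / γ ^ 2) = h := by
    funext γ; simp only [hhdef]; rw [hcan γ]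
  rw [this, hkey]
  field_simp
end

section
/- For every β > 0 and every t ≥ 0, μ{x : f(x) − E[f] > t} ≤ exp( β ∫₀^β S_f(γ)/γ² dγ − β t ). -/
open MeasureTheory Real Filter Set

namespace Stmt1Aux

variable {Ω : Type*} [MeasurableSpace Ω] (μ : Measure Ω) [IsProbabilityMeasure μ]
  (f : Ω → ℝ)

/-- `Z μ f n γ = ∫ f^n e^{γ f}`. -/
noncomputable def Z (n : ℕ) (γ : ℝ) : ℝ := ∫ x, f x ^ n * Real.exp (γ * f x) ∂μ

variable {f} {C : ℝ}

lemma meas_aux (hf : Measurable f) (n : ℕ) (γ : ℝ) :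
    AEStronglyMeasurable (fun x => f x ^ n * Real.exp (γ * f x)) μ :=
  ((hf.pow_const n).mul ((hf.const_mul γ).exp)).aestronglyMeasurable

lemma norm_aux (hC : ∀ x, |f x| ≤ C) (n : ℕ) {γ b : ℝ} (hγ : |γ| ≤ b) (x : Ω) :
    ‖f x ^ n * Real.exp (γ * f x)‖ ≤ C ^ n * Real.exp (b * C) := by
  have h1 : |f x| ≤ C := hC x
  have hC0 : 0 ≤ C := (abs_nonneg _).trans h1
  rw [norm_mul, norm_pow, Real.norm_eq_abs, Real.norm_eq_abs, abs_exp]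
  have hb0 : 0 ≤ b := (abs_nonneg γ).trans hγ
  have h2 : γ * f x ≤ b * C := by
    calc γ * f x ≤ |γ * f x| := le_abs_self _
    _ = |γ| * |f x| := abs_mul _ _
    _ ≤ b * C := mul_le_mul hγ h1 (abs_nonneg _) hb0
  exact mul_le_mul (pow_le_pow_left₀ (abs_nonneg _) h1 n) (exp_le_exp.mpr h2)
    (exp_pos _).le (pow_nonneg hC0 n)

lemma integrable_aux (hf : Measurable f) (hC : ∀ x, |f x| ≤ C) (n : ℕ) (γ : ℝ) :
    Integrable (fun x => f x ^ n * Real.exp (γ * f x)) μ := by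
  refine Integrable.mono' (integrable_const (C ^ n * Real.exp (|γ| * C)))
    (meas_aux μ hf n γ) (ae_of_all _ fun x => ?_)
  exact norm_aux hC n le_rfl x

lemma hasDerivAt_Z (hf : Measurable f) (hC : ∀ x, |f x| ≤ C) (n : ℕ) (γ : ℝ) :
    HasDerivAt (Z μ f n) (Z μ f (n + 1) γ) γ := by
  have key := hasDerivAt_integral_of_dominated_loc_of_deriv_le (μ := μ)
    (F := fun t x => f x ^ n * Real.exp (t * f x))
    (F' := fun t x => f x ^ (n + 1) * Real.exp (t * f x))
    (bound := fun _ => C ^ (n + 1) * Real.exp ((|γ| + 1) * C))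
    (Metric.ball_mem_nhds γ zero_lt_one)
    (Eventually.of_forall fun t => meas_aux μ hf n t)
    (integrable_aux μ hf hC n γ)
    (meas_aux μ hf (n + 1) γ)
    (ae_of_all _ fun x t ht => by
      have : |t| ≤ |γ| + 1 := by
        have := mem_ball_iff_norm.mp ht
        have h2 := abs_sub_abs_le_abs_sub t γ
        rw [Real.norm_eq_abs] at this
        linarith
      exact norm_aux hC (n + 1) this x)
    (integrable_const _)
    (ae_of_all _ fun x t _ => by
      have h1 : HasDerivAt (fun s : ℝ => s * f x) (f x) t := hasDerivAt_mul_const (f x)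
      have h2 := (h1.exp).const_mul (f x ^ n)
      exact h2.congr_deriv (by ring))
  exact key.2

lemma Z0_pos (hf : Measurable f) (hC : ∀ x, |f x| ≤ C) (γ : ℝ) : 0 < Z μ f 0 γ := by
  have h1 : ∀ x, Real.exp (-(|γ| * C)) ≤ f x ^ 0 * Real.exp (γ * f x) := by
    intro x
    rw [pow_zero, one_mul, exp_le_exp]
    calc -(|γ| * C) ≤ -|γ * f x| := by
          rw [neg_le_neg_iff, abs_mul]
          exact mul_le_mul_of_nonneg_left (hC x) (abs_nonneg _)
    _ ≤ γ * f x := neg_abs_le _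
  calc (0:ℝ) < Real.exp (-(|γ| * C)) := exp_pos _
  _ = ∫ _x, Real.exp (-(|γ| * C)) ∂μ := by simp
  _ ≤ Z μ f 0 γ := integral_mono (integrable_const _) (integrable_aux μ hf hC 0 γ) h1

lemma Z_abs_le (hf : Measurable f) (hC : ∀ x, |f x| ≤ C) (n : ℕ) (γ : ℝ) :
    |Z μ f n γ| ≤ C ^ n * Z μ f 0 γ := by
  have hC0 : 0 ≤ C := by
    rcases isEmpty_or_nonempty Ω with h | ⟨⟨x⟩⟩
    · exfalso
      have : (μ Set.univ) = 1 := measure_univ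
      rw [Set.univ_eq_empty_iff.mpr h] at this
      simp at this
    · exact (abs_nonneg _).trans (hC x)
  have habs : (fun x => |f x| ^ n * Real.exp (γ * f x))
      = fun x => |f x ^ n * Real.exp (γ * f x)| := by
    funext x; rw [abs_mul, abs_pow, abs_exp]
  calc |Z μ f n γ| ≤ ∫ x, |f x| ^ n * Real.exp (γ * f x) ∂μ := by
        simpa [Z, Real.norm_eq_abs] using
          norm_integral_le_integral_norm (μ := μ) (fun x => f x ^ n * Real.exp (γ * f x))
  _ ≤ ∫ x, C ^ n * (f x ^ 0 * Real.exp (γ * f x)) ∂μ := by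
      refine integral_mono (by rw [habs]; exact (integrable_aux μ hf hC n γ).abs)
        ((integrable_aux μ hf hC 0 γ).const_mul _) fun x => ?_
      rw [pow_zero, one_mul]
      exact mul_le_mul_of_nonneg_right (pow_le_pow_left₀ (abs_nonneg _) (hC x) n)
        (exp_pos _).le
  _ = C ^ n * Z μ f 0 γ := integral_const_mul _ _

lemma Z2_nonneg (γ : ℝ) : 0 ≤ Z μ f 2 γ :=
  integral_nonneg fun x => mul_nonneg (sq_nonneg _) (exp_pos _).le

end Stmt1Aux



theorem stmt_1 {Ω : Type*} [MeasurableSpace Ω] (μ : Measure Ω) [IsProbabilityMeasure μ]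
    (f : Ω → ℝ) (hf : Measurable f) (C : ℝ) (hC : ∀ x, |f x| ≤ C)
    (β : ℝ) (hβ : 0 < β) (t : ℝ) (ht : 0 ≤ t) :
    (μ {x | f x - ∫ y, f y ∂μ > t}).toReal
      ≤ Real.exp (β * (∫ γ in (0:ℝ)..β, canEntropy μ f γ / γ ^ 2) - β * t) := by
  classical
  have hC0 : 0 ≤ C := by
    rcases isEmpty_or_nonempty Ω with h | ⟨⟨x⟩⟩
    · exfalso
      have h1 : (μ Set.univ) = 1 := measure_univ
      rw [Set.univ_eq_empty_iff.mpr h] at h1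
      simp at h1
    · exact (abs_nonneg _).trans (hC x)
  set m := ∫ y, f y ∂μ with hm
  have hZd : ∀ (n : ℕ) (γ : ℝ), HasDerivAt (Stmt1Aux.Z μ f n) (Stmt1Aux.Z μ f (n+1) γ) γ :=
    fun n γ => Stmt1Aux.hasDerivAt_Z μ hf hC n γ
  have hZpos : ∀ γ, 0 < Stmt1Aux.Z μ f 0 γ := Stmt1Aux.Z0_pos μ hf hC
  have hZcont : ∀ n, Continuous (Stmt1Aux.Z μ f n) :=
    fun n => continuous_iff_continuousAt.mpr fun γ => (hZd n γ).continuousAt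
  -- canonical entropy in terms of Z
  have hcan : ∀ γ, canEntropy μ f γ
      = γ * (Stmt1Aux.Z μ f 1 γ / Stmt1Aux.Z μ f 0 γ) - Real.log (Stmt1Aux.Z μ f 0 γ) := by
    intro γ
    simp only [canEntropy, thermalExp, Stmt1Aux.Z, pow_one, pow_zero, one_mul]
  have hScont : Continuous (canEntropy μ f) := by
    have hfe : canEntropy μ f = fun γ =>
        γ * (Stmt1Aux.Z μ f 1 γ / Stmt1Aux.Z μ f 0 γ) - Real.log (Stmt1Aux.Z μ f 0 γ) :=
      funext hcan
    rw [hfe]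
    exact (continuous_id.mul ((hZcont 1).div (hZcont 0) fun γ => (hZpos γ).ne')).sub
      ((hZcont 0).log fun γ => (hZpos γ).ne')
  -- derivative of canonical entropy
  have hS : ∀ γ, HasDerivAt (canEntropy μ f)
      (γ * ((Stmt1Aux.Z μ f 2 γ * Stmt1Aux.Z μ f 0 γ - Stmt1Aux.Z μ f 1 γ * Stmt1Aux.Z μ f 1 γ)
        / (Stmt1Aux.Z μ f 0 γ)^2)) γ := by
    intro γ
    have h1 : HasDerivAt (fun s : ℝ =>
        s * (Stmt1Aux.Z μ f 1 s / Stmt1Aux.Z μ f 0 s) - Real.log (Stmt1Aux.Z μ f 0 s))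
        (1 * (Stmt1Aux.Z μ f 1 γ / Stmt1Aux.Z μ f 0 γ)
          + γ * ((Stmt1Aux.Z μ f 2 γ * Stmt1Aux.Z μ f 0 γ - Stmt1Aux.Z μ f 1 γ * Stmt1Aux.Z μ f 1 γ)
            / (Stmt1Aux.Z μ f 0 γ)^2)
          - Stmt1Aux.Z μ f 1 γ / Stmt1Aux.Z μ f 0 γ) γ :=
      ((hasDerivAt_id γ).mul ((hZd 1 γ).div (hZd 0 γ) (hZpos γ).ne')).sub
        ((hZd 0 γ).log (hZpos γ).ne')
    have hfe : canEntropy μ f = fun s =>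
        s * (Stmt1Aux.Z μ f 1 s / Stmt1Aux.Z μ f 0 s) - Real.log (Stmt1Aux.Z μ f 0 s) :=
      funext hcan
    rw [hfe]
    convert h1 using 1
    ring
  -- bound on ℓ'
  have hℓ'b : ∀ s : ℝ,
      |(Stmt1Aux.Z μ f 2 s * Stmt1Aux.Z μ f 0 s - Stmt1Aux.Z μ f 1 s * Stmt1Aux.Z μ f 1 s)
        / (Stmt1Aux.Z μ f 0 s)^2| ≤ C^2 := by
    intro s
    have h0 := hZpos s
    have h1 := Stmt1Aux.Z_abs_le μ hf hC 1 s
    have h2 := Stmt1Aux.Z_abs_le μ hf hC 2 s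
    have h2' := Stmt1Aux.Z2_nonneg μ (f := f) s
    rw [pow_one] at h1
    rw [abs_div, abs_of_pos (pow_pos h0 2), div_le_iff₀ (pow_pos h0 2)]
    have hb1 := abs_le.mp h1
    have hb2 := abs_le.mp h2
    have hsq : (Stmt1Aux.Z μ f 1 s)^2 ≤ C^2 * (Stmt1Aux.Z μ f 0 s)^2 := by
      have := abs_mul_abs_self (Stmt1Aux.Z μ f 1 s)
      nlinarith [abs_nonneg (Stmt1Aux.Z μ f 1 s)]
    rw [abs_le]
    constructor <;> nlinarith
  have hcan0 : canEntropy μ f 0 = 0 := by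
    rw [hcan 0]
    have hz : Stmt1Aux.Z μ f 0 0 = 1 := by simp [Stmt1Aux.Z]
    rw [hz]
    simp
  have hℓ'cont : Continuous (fun s : ℝ =>
      (Stmt1Aux.Z μ f 2 s * Stmt1Aux.Z μ f 0 s - Stmt1Aux.Z μ f 1 s * Stmt1Aux.Z μ f 1 s)
        / (Stmt1Aux.Z μ f 0 s)^2) :=
    (((hZcont 2).mul (hZcont 0)).sub ((hZcont 1).mul (hZcont 1))).div
      ((hZcont 0).pow 2) (fun s => pow_ne_zero 2 (hZpos s).ne')
  -- quadratic bound on canonical entropy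
  have hcanb : ∀ γ ∈ Set.Ioc (0:ℝ) β, |canEntropy μ f γ| ≤ C^2 * γ^2 := by
    intro γ hγ
    have hFTC : canEntropy μ f γ - canEntropy μ f 0
        = ∫ s in (0:ℝ)..γ, s * ((Stmt1Aux.Z μ f 2 s * Stmt1Aux.Z μ f 0 s
            - Stmt1Aux.Z μ f 1 s * Stmt1Aux.Z μ f 1 s) / (Stmt1Aux.Z μ f 0 s)^2) :=
      (intervalIntegral.integral_eq_sub_of_hasDerivAt (fun s _ => hS s)
        ((continuous_id.mul hℓ'cont).intervalIntegrable 0 γ)).symm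
    have hb : ‖∫ s in (0:ℝ)..γ, s * ((Stmt1Aux.Z μ f 2 s * Stmt1Aux.Z μ f 0 s
        - Stmt1Aux.Z μ f 1 s * Stmt1Aux.Z μ f 1 s) / (Stmt1Aux.Z μ f 0 s)^2)‖
        ≤ C^2 * γ * |γ - 0| := by
      apply intervalIntegral.norm_integral_le_of_norm_le_const
      intro s hs
      rw [Set.uIoc_of_le hγ.1.le] at hs
      rw [Real.norm_eq_abs, abs_mul]
      have hs1 : |s| ≤ γ := by rw [abs_of_pos hs.1]; exact hs.2
      calc |s| * |(Stmt1Aux.Z μ f 2 s * Stmt1Aux.Z μ f 0 s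
          - Stmt1Aux.Z μ f 1 s * Stmt1Aux.Z μ f 1 s) / (Stmt1Aux.Z μ f 0 s)^2|
            ≤ γ * C^2 := mul_le_mul hs1 (hℓ'b s) (abs_nonneg _) hγ.1.le
      _ = C^2 * γ := mul_comm _ _
    rw [hcan0, sub_zero] at hFTC
    rw [hFTC]
    calc ‖_‖ ≤ C^2 * γ * |γ - 0| := hb
    _ = C^2 * γ^2 := by
        rw [sub_zero, abs_of_pos hγ.1]; ring
  -- interval integrability on [0, β]
  have hII : IntervalIntegrable (fun γ => canEntropy μ f γ / γ^2) volume 0 β := by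
    rw [intervalIntegrable_iff_integrableOn_Ioc_of_le hβ.le]
    refine Integrable.mono' (g := fun _ => C^2) (integrableOn_const measure_Ioc_lt_top.ne)
      ((hScont.measurable.div ((measurable_id.pow_const 2))).aestronglyMeasurable) ?_
    rw [ae_restrict_iff' measurableSet_Ioc]
    refine ae_of_all _ fun γ hγ => ?_
    rw [Real.norm_eq_abs, abs_div, abs_of_pos (pow_pos hγ.1 2),
      div_le_iff₀ (pow_pos hγ.1 2)]
    exact hcanb γ hγ
  -- FTC on [ε, β]
  have hFTC2 : ∀ ε : ℝ, 0 < ε → ε ≤ β →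
      ∫ γ in ε..β, canEntropy μ f γ / γ^2
        = Real.log (Stmt1Aux.Z μ f 0 β) / β - Real.log (Stmt1Aux.Z μ f 0 ε) / ε := by
    intro ε hε hεβ
    have hG : ∀ γ : ℝ, γ ≠ 0 → HasDerivAt (fun s => Real.log (Stmt1Aux.Z μ f 0 s) / s)
        (canEntropy μ f γ / γ^2) γ := by
      intro γ hγ0
      have h1 := ((hZd 0 γ).log (hZpos γ).ne').div (hasDerivAt_id γ) hγ0
      refine HasDerivAt.congr_deriv h1 ?_
      rw [hcan γ]
      simp only [id_eq, zero_add]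
      ring
    refine intervalIntegral.integral_eq_sub_of_hasDerivAt (fun s hs => hG s ?_) ?_
    · rw [Set.uIcc_of_le hεβ] at hs
      exact (lt_of_lt_of_le hε hs.1).ne'
    · refine (ContinuousOn.div hScont.continuousOn
        ((continuous_id.pow 2).continuousOn) fun s hs => ?_).intervalIntegrable
      rw [Set.uIcc_of_le hεβ] at hs
      exact pow_ne_zero 2 (lt_of_lt_of_le hε hs.1).ne'
  -- splitting
  have hsplit : ∀ ε ∈ Set.Ioc (0:ℝ) β,
      ∫ γ in ε..β, canEntropy μ f γ / γ^2
        = (∫ γ in (0:ℝ)..β, canEntropy μ f γ / γ^2)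
          - ∫ γ in (0:ℝ)..ε, canEntropy μ f γ / γ^2 := by
    intro ε hε
    have h1 : IntervalIntegrable (fun γ => canEntropy μ f γ / γ^2) volume 0 ε :=
      hII.mono_set (by
        rw [Set.uIcc_of_le hε.1.le, Set.uIcc_of_le hβ.le]
        exact Set.Icc_subset_Icc le_rfl hε.2)
    have h2 : IntervalIntegrable (fun γ => canEntropy μ f γ / γ^2) volume ε β :=
      hII.mono_set (by
        rw [Set.uIcc_of_le hε.2, Set.uIcc_of_le hβ.le]
        exact Set.Icc_subset_Icc hε.1.le le_rfl)
    have := intervalIntegral.integral_add_adjacent_intervals h1 h2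
    linarith
  -- limit of the small piece
  have hlim0 : Tendsto (fun ε => ∫ γ in (0:ℝ)..ε, canEntropy μ f γ / γ^2)
      (nhdsWithin 0 (Set.Ioi 0)) (nhds 0) := by
    apply squeeze_zero_norm' (a := fun ε => C^2 * ε)
    · filter_upwards [Ioc_mem_nhdsGT_of_mem (Set.left_mem_Ico.mpr hβ)] with ε hε
      have hb : ‖∫ γ in (0:ℝ)..ε, canEntropy μ f γ / γ^2‖ ≤ C^2 * |ε - 0| := by
        apply intervalIntegral.norm_integral_le_of_norm_le_const
        intro s hs
        rw [Set.uIoc_of_le hε.1.le] at hs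
        have hsmem : s ∈ Set.Ioc (0:ℝ) β := ⟨hs.1, hs.2.trans hε.2⟩
        rw [Real.norm_eq_abs, abs_div, abs_of_pos (pow_pos hs.1 2)]
        rw [div_le_iff₀ (pow_pos hs.1 2)]
        calc |canEntropy μ f s| ≤ C^2 * s^2 := hcanb s hsmem
        _ ≤ C^2 * s^2 := le_rfl
      rwa [sub_zero, abs_of_pos hε.1] at hb
    · have h1 : Tendsto (fun ε : ℝ => C^2 * ε) (nhds 0) (nhds 0) := by
        have h2 : Continuous (fun ε : ℝ => C^2 * ε) := continuous_const.mul continuous_id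
        have h3 := h2.tendsto (0:ℝ)
        simpa using h3
      exact h1.mono_left nhdsWithin_le_nhds
  -- limit of log Z / ε
  have hGlim : Tendsto (fun ε => Real.log (Stmt1Aux.Z μ f 0 ε) / ε)
      (nhdsWithin 0 (Set.Ioi 0)) (nhds m) := by
    have hd0 := (hZd 0 0).log (hZpos 0).ne'
    have hval : Stmt1Aux.Z μ f 1 0 / Stmt1Aux.Z μ f 0 0 = m := by
      simp [Stmt1Aux.Z, hm]
    rw [hasDerivAt_iff_tendsto_slope, hval] at hd0
    have hL0 : Real.log (Stmt1Aux.Z μ f 0 0) = 0 := by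
      have hz : Stmt1Aux.Z μ f 0 0 = 1 := by simp [Stmt1Aux.Z]
      rw [hz, Real.log_one]
    have hmono : nhdsWithin (0:ℝ) (Set.Ioi 0) ≤ nhdsWithin 0 {(0:ℝ)}ᶜ :=
      nhdsWithin_mono 0 (fun x hx => ne_of_gt hx)
    refine Tendsto.congr ?_ (hd0.mono_left hmono)
    intro ε
    rw [slope_def_field, hL0]
    ring
  -- value of the integral
  have key : ∫ γ in (0:ℝ)..β, canEntropy μ f γ / γ^2
      = Real.log (Stmt1Aux.Z μ f 0 β) / β - m := by
    have t1 : Tendsto (fun ε => ∫ γ in ε..β, canEntropy μ f γ / γ^2)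
        (nhdsWithin 0 (Set.Ioi 0)) (nhds (∫ γ in (0:ℝ)..β, canEntropy μ f γ / γ^2)) := by
      have := (tendsto_const_nhds (x := ∫ γ in (0:ℝ)..β, canEntropy μ f γ / γ^2)
        (f := nhdsWithin (0:ℝ) (Set.Ioi 0))).sub hlim0
      rw [sub_zero] at this
      refine this.congr' ?_
      filter_upwards [Ioc_mem_nhdsGT_of_mem (Set.left_mem_Ico.mpr hβ)] with ε hε
      exact (hsplit ε hε).symm
    have t2 : Tendsto (fun ε => ∫ γ in ε..β, canEntropy μ f γ / γ^2)
        (nhdsWithin 0 (Set.Ioi 0))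
        (nhds (Real.log (Stmt1Aux.Z μ f 0 β) / β - m)) := by
      have := (tendsto_const_nhds (x := Real.log (Stmt1Aux.Z μ f 0 β) / β)
        (f := nhdsWithin (0:ℝ) (Set.Ioi 0))).sub hGlim
      refine this.congr' ?_
      filter_upwards [Ioc_mem_nhdsGT_of_mem (Set.left_mem_Ico.mpr hβ)] with ε hε
      exact (hFTC2 ε hε.1 hε.2).symm
    exact tendsto_nhds_unique t1 t2
  -- final Chernoff bound
  have hint : Integrable (fun ω => Real.exp (β * f ω)) μ := by
    have := Stmt1Aux.integrable_aux μ hf hC 0 β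
    simpa using this
  have hmgf : ProbabilityTheory.mgf f μ β = Stmt1Aux.Z μ f 0 β := by
    simp [ProbabilityTheory.mgf, Stmt1Aux.Z]
  have hmarkov := ProbabilityTheory.measure_ge_le_exp_mul_mgf (X := f) (μ := μ) (t := β)
    (m + t) hβ.le hint
  have hsub : {x | f x - m > t} ⊆ {x | m + t ≤ f x} := by
    intro x hx
    simp only [Set.mem_setOf_eq] at hx ⊢
    linarith
  have hexp : Real.exp (β * (∫ γ in (0:ℝ)..β, canEntropy μ f γ / γ ^ 2) - β * t)
      = Real.exp (-β * (m + t)) * ProbabilityTheory.mgf f μ β := by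
    rw [key, hmgf]
    rw [show β * (Real.log (Stmt1Aux.Z μ f 0 β) / β - m) - β * t
        = -β * (m + t) + Real.log (Stmt1Aux.Z μ f 0 β) by field_simp; ring]
    rw [Real.exp_add, Real.exp_log (hZpos β)]
  rw [hexp]
  calc (μ {x | f x - m > t}).toReal ≤ (μ {x | m + t ≤ f x}).toReal :=
        ENNReal.toReal_mono (measure_ne_top μ _) (measure_mono hsub)
  _ ≤ Real.exp (-β * (m + t)) * ProbabilityTheory.mgf f μ β := hmarkov
end

section
/- For every β > 0 the canonical entropy has the fluctuation representation S_f(β) = ∫₀^β ∫_t^β σ²_{sf}[f] ds dt. -/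
open MeasureTheory Real

/-- Thermal variance `σ²_{βf}[g] = E_{βf}[g²] − (E_{βf}[g])²`. -/
noncomputable def thermalVar {Ω : Type*} [MeasurableSpace Ω] (μ : Measure Ω)
    (β : ℝ) (f g : Ω → ℝ) : ℝ :=
  thermalExp μ β f (fun x => g x ^ 2) - (thermalExp μ β f g) ^ 2

lemma int_bdd {Ω : Type*} [MeasurableSpace Ω] (μ : Measure Ω) [IsFiniteMeasure μ]
    {h : Ω → ℝ} (hm : AEStronglyMeasurable h μ) {D : ℝ} (hD : ∀ x, |h x| ≤ D) :
    Integrable h μ :=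
  (integrable_const D).mono' hm (ae_of_all _ fun x => by simpa using hD x)

lemma hasDerivAt_int {Ω : Type*} [MeasurableSpace Ω] (μ : Measure Ω) [IsProbabilityMeasure μ]
    {f g : Ω → ℝ} (hf : Measurable f) (hg : Measurable g) {C D : ℝ}
    (hC : ∀ x, |f x| ≤ C) (hD : ∀ x, |g x| ≤ D) (t₀ : ℝ) :
    HasDerivAt (fun t => ∫ x, g x * Real.exp (t * f x) ∂μ)
      (∫ x, g x * f x * Real.exp (t₀ * f x) ∂μ) t₀ := by
  have hC' : ∀ x, |f x| ≤ |C| := fun x => (hC x).trans (le_abs_self C)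
  have hD' : ∀ x, |g x| ≤ |D| := fun x => (hD x).trans (le_abs_self D)
  have hmeas : ∀ t : ℝ, AEStronglyMeasurable (fun x => g x * Real.exp (t * f x)) μ :=
    fun t => (hg.mul ((measurable_const.mul hf).exp)).aestronglyMeasurable
  have hexp : ∀ (t : ℝ) (x : Ω), Real.exp (t * f x) ≤ Real.exp (|t| * |C|) := by
    intro t x
    apply Real.exp_le_exp.2
    calc t * f x ≤ |t * f x| := le_abs_self _
    _ = |t| * |f x| := abs_mul _ _
    _ ≤ |t| * |C| := mul_le_mul_of_nonneg_left (hC' x) (abs_nonneg t)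
  have key := hasDerivAt_integral_of_dominated_loc_of_deriv_le (μ := μ)
    (F := fun t x => g x * Real.exp (t * f x))
    (F' := fun t x => g x * f x * Real.exp (t * f x))
    (bound := fun _ => |D| * |C| * Real.exp ((|t₀| + 1) * |C|))
    (x₀ := t₀) (Metric.ball_mem_nhds t₀ one_pos)
    (Filter.Eventually.of_forall fun t => hmeas t)
    (int_bdd μ (hmeas t₀) (D := |D| * Real.exp (|t₀| * |C|)) ?_)
    ((hg.mul hf).mul ((measurable_const.mul hf).exp)).aestronglyMeasurable
    (ae_of_all _ ?_)
    (integrable_const _)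
    (ae_of_all _ ?_)
  · exact key.2
  · intro x
    rw [abs_mul]
    exact mul_le_mul (hD' x) ((Real.abs_exp _).le.trans (hexp t₀ x)) (abs_nonneg _) (abs_nonneg D)
  · intro x t ht
    have h1 : |t| ≤ |t₀| + 1 := by
      have := mem_ball_iff_norm.1 ht
      calc |t| = |t₀ + (t - t₀)| := by ring_nf
      _ ≤ |t₀| + |t - t₀| := abs_add_le _ _
      _ ≤ |t₀| + 1 := add_le_add_right (le_of_lt (by simpa [Real.norm_eq_abs] using this)) _
    have h2 : Real.exp (t * f x) ≤ Real.exp ((|t₀| + 1) * |C|) :=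
      (hexp t x).trans (Real.exp_le_exp.2
        (mul_le_mul_of_nonneg_right h1 (abs_nonneg C)))
    calc ‖g x * f x * Real.exp (t * f x)‖ = |g x| * |f x| * Real.exp (t * f x) := by
          rw [Real.norm_eq_abs, abs_mul, abs_mul, Real.abs_exp]
    _ ≤ |D| * |C| * Real.exp ((|t₀| + 1) * |C|) :=
        mul_le_mul (mul_le_mul (hD' x) (hC' x) (abs_nonneg _) (abs_nonneg D)) h2
          (Real.exp_nonneg _) (by positivity)
  · intro x t ht
    have h1 : HasDerivAt (fun t : ℝ => t * f x) (f x) t := hasDerivAt_mul_const (f x)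
    have := (h1.exp).const_mul (g x)
    refine this.congr_deriv ?_
    ring

theorem stmt_3 {Ω : Type*} [MeasurableSpace Ω] (μ : Measure Ω) [IsProbabilityMeasure μ]
    (f : Ω → ℝ) (hf : Measurable f) (C : ℝ) (hC : ∀ x, |f x| ≤ C)
    (β : ℝ) (hβ : 0 < β) :
    canEntropy μ f β = ∫ t in (0:ℝ)..β, ∫ s in t..β, thermalVar μ s f f := by
  set Z : ℝ → ℝ := fun t => ∫ x, Real.exp (t * f x) ∂μ with hZdef
  set N : ℝ → ℝ := fun t => ∫ x, f x * Real.exp (t * f x) ∂μ with hNdef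
  set G : ℝ → ℝ := fun t => N t / Z t with hGdef
  have hone : ∀ x : Ω, |(1 : ℝ)| ≤ 1 := fun _ => by norm_num
  have hff : ∀ x, |f x * f x| ≤ C * C := fun x => by
    rw [abs_mul]
    exact mul_le_mul (hC x) (hC x) (abs_nonneg _) ((abs_nonneg _).trans (hC x))
  -- derivative of Z is N
  have hZ : ∀ t, HasDerivAt Z (N t) t := by
    intro t
    have := hasDerivAt_int μ hf measurable_one hC hone t
    simpa [hZdef, hNdef] using this
  -- derivative of N
  have hN : ∀ t, HasDerivAt N (∫ x, f x * f x * Real.exp (t * f x) ∂μ) t := by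
    intro t
    have := hasDerivAt_int μ hf hf hC hC t
    simpa [hNdef, mul_assoc] using this
  have hZpos : ∀ t, 0 < Z t := fun t => integral_exp_pos
    (int_bdd μ ((measurable_const.mul hf).exp).aestronglyMeasurable
      (D := Real.exp (|t| * |C|)) (fun x => by
        rw [Real.abs_exp]
        apply Real.exp_le_exp.2
        calc t * f x ≤ |t * f x| := le_abs_self _
        _ = |t| * |f x| := abs_mul _ _
        _ ≤ |t| * |C| := mul_le_mul_of_nonneg_left ((hC x).trans (le_abs_self C)) (abs_nonneg t)))
  -- derivative of G is thermalVar
  have hG : ∀ t, HasDerivAt G (thermalVar μ t f f) t := by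
    intro t
    have := (hN t).div (hZ t) (hZpos t).ne'
    refine this.congr_deriv ?_
    symm
    have : thermalExp μ t f (fun x => f x ^ 2) = (∫ x, f x * f x * Real.exp (t * f x) ∂μ) / Z t := by
      simp [thermalExp, sq, hZdef]
    rw [thermalVar, this, thermalExp]
    change (∫ x, f x * f x * Real.exp (t * f x) ∂μ) / Z t - (N t / Z t) ^ 2 = _
    generalize (∫ x, f x * f x * Real.exp (t * f x) ∂μ) = A
    have hZ0 : Z t ≠ 0 := (hZpos t).ne'
    field_simp
  -- derivative of log Z is G
  have hL : ∀ t, HasDerivAt (fun t => Real.log (Z t)) (G t) t := by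
    intro t
    exact (hZ t).log (hZpos t).ne'
  have hNcont : Continuous N := continuous_iff_continuousAt.2 fun t => (hN t).continuousAt
  have hZcont : Continuous Z := continuous_iff_continuousAt.2 fun t => (hZ t).continuousAt
  have hGcont : Continuous G := hNcont.div hZcont fun t => (hZpos t).ne'
  set M : ℝ → ℝ := fun s => ∫ x, f x ^ 2 * Real.exp (s * f x) ∂μ with hMdef
  have hsq : ∀ x, |f x ^ 2| ≤ C * C := fun x => by
    rw [sq, abs_mul]
    exact mul_le_mul (hC x) (hC x) (abs_nonneg _) ((abs_nonneg _).trans (hC x))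
  have hM : ∀ t, HasDerivAt M (∫ x, f x ^ 2 * f x * Real.exp (t * f x) ∂μ) t := fun t =>
    hasDerivAt_int μ hf (hf.pow_const 2) hC hsq t
  have hMcont : Continuous M := continuous_iff_continuousAt.2 fun t => (hM t).continuousAt
  have hVdef : ∀ s, thermalVar μ s f f = M s / Z s - (G s) ^ 2 := fun s => rfl
  have hVcont : Continuous (fun s => thermalVar μ s f f) := by
    simp only [hVdef]
    exact (hMcont.div hZcont fun t => (hZpos t).ne').sub (hGcont.pow 2)
  have hinner : ∀ t, ∫ s in t..β, thermalVar μ s f f = G β - G t := fun t =>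
    intervalIntegral.integral_eq_sub_of_hasDerivAt (fun s _ => hG s)
      (hVcont.intervalIntegrable t β)
  have h1 : ∫ t in (0:ℝ)..β, ∫ s in t..β, thermalVar μ s f f
      = ∫ t in (0:ℝ)..β, (G β - G t) := intervalIntegral.integral_congr fun t _ => hinner t
  have h2 : ∫ t in (0:ℝ)..β, G t = Real.log (Z β) - Real.log (Z 0) :=
    intervalIntegral.integral_eq_sub_of_hasDerivAt (fun s _ => hL s)
      (hGcont.intervalIntegrable _ _)
  have hZ0 : Z 0 = 1 := by simp [hZdef]
  rw [h1, intervalIntegral.integral_sub (intervalIntegrable_const) (hGcont.intervalIntegrable _ _),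
    intervalIntegral.integral_const, h2, hZ0, Real.log_one]
  show β * (N β / Z β) - Real.log (Z β) = (β - 0) • (G β) - (Real.log (Z β) - 0)
  simp [hGdef]
end

section
/- If f − E[f] ≤ 1 pointwise, then for every β > 0 the thermal variance satisfies σ²_{βf}[f] ≤ e^β · σ²[f]. -/
open MeasureTheory Real

lemma intg_bdd {Ω : Type*} [MeasurableSpace Ω] (μ : Measure Ω) [IsFiniteMeasure μ]
    (h : Ω → ℝ) (hm : Measurable h) (D : ℝ) (hb : ∀ x, |h x| ≤ D) :
    Integrable h μ := by
  apply Integrable.mono' (integrable_const D) hm.aestronglyMeasurable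
  filter_upwards with x
  simpa using hb x

theorem stmt_10 {Ω : Type*} [MeasurableSpace Ω] (μ : Measure Ω) [IsProbabilityMeasure μ]
    (f : Ω → ℝ) (hf : Measurable f) (C : ℝ) (hC : ∀ x, |f x| ≤ C)
    (h1 : ∀ x, f x - ∫ y, f y ∂μ ≤ 1) (β : ℝ) (hβ : 0 < β) :
    thermalVar μ β f f ≤ Real.exp β * ∫ x, (f x - ∫ y, f y ∂μ) ^ 2 ∂μ := by
  set m : ℝ := ∫ y, f y ∂μ with hm
  have iF : Integrable f μ := intg_bdd μ f hf C hC
  have hmbd : |m| ≤ C := by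
    calc |m| ≤ ∫ y, |f y| ∂μ := by
          simpa [Real.norm_eq_abs] using norm_integral_le_integral_norm (μ := μ) f
    _ ≤ ∫ _, C ∂μ := integral_mono (intg_bdd μ _ hf.abs C (by simpa using hC))
          (integrable_const C) hC
    _ = C := by simp
  have hCnn : 0 ≤ C := (abs_nonneg m).trans hmbd
  -- basic pointwise bounds
  have hEbd : ∀ x, Real.exp (β * f x) ≤ Real.exp (β * C) := fun x =>
    Real.exp_le_exp.2 (by
      have := (abs_le.1 (hC x)).2
      nlinarith)
  have hEpos : ∀ x, 0 < Real.exp (β * f x) := fun x => Real.exp_pos _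
  have hgbd : ∀ x, |f x - m| ≤ 2 * C := fun x => by
    calc |f x - m| ≤ |f x| + |m| := abs_sub (f x) m
    _ ≤ 2 * C := by have := hC x; linarith
  -- integrability
  have iE : Integrable (fun x => Real.exp (β * f x)) μ :=
    intg_bdd μ _ ((hf.const_mul β).exp) (Real.exp (β * C)) (fun x => by
      rw [abs_of_pos (hEpos x)]; exact hEbd x)
  have ifE : Integrable (fun x => f x * Real.exp (β * f x)) μ :=
    intg_bdd μ _ (hf.mul ((hf.const_mul β).exp)) (C * Real.exp (β * C)) (fun x => by
      rw [abs_mul, abs_of_pos (hEpos x)]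
      exact mul_le_mul (hC x) (hEbd x) (le_of_lt (hEpos x)) hCnn)
  have if2E : Integrable (fun x => f x ^ 2 * Real.exp (β * f x)) μ :=
    intg_bdd μ _ ((hf.pow_const 2).mul ((hf.const_mul β).exp)) (C ^ 2 * Real.exp (β * C))
      (fun x => by
        rw [abs_mul, abs_of_pos (hEpos x)]
        apply mul_le_mul _ (hEbd x) (le_of_lt (hEpos x)) (by positivity)
        rw [abs_pow]
        exact pow_le_pow_left₀ (abs_nonneg _) (hC x) 2)
  have ig2E : Integrable (fun x => (f x - m) ^ 2 * Real.exp (β * f x)) μ :=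
    intg_bdd μ _ (((hf.sub_const m).pow_const 2).mul ((hf.const_mul β).exp))
      ((2 * C) ^ 2 * Real.exp (β * C)) (fun x => by
        rw [abs_mul, abs_of_pos (hEpos x)]
        apply mul_le_mul _ (hEbd x) (le_of_lt (hEpos x)) (by positivity)
        rw [abs_pow]
        exact pow_le_pow_left₀ (abs_nonneg _) (hgbd x) 2)
  have ig2 : Integrable (fun x => (f x - m) ^ 2) μ :=
    intg_bdd μ _ ((hf.sub_const m).pow_const 2) ((2 * C) ^ 2) (fun x => by
      rw [abs_pow]; exact pow_le_pow_left₀ (abs_nonneg _) (hgbd x) 2)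
  have ig : Integrable (fun x => f x - m) μ := iF.sub (integrable_const m)
  set Z : ℝ := ∫ x, Real.exp (β * f x) ∂μ with hZdef
  -- lower bound on Z
  have hZlb : Real.exp (β * m) ≤ Z := by
    have hpt : ∀ x, Real.exp (β * m) * (1 + β * (f x - m)) ≤ Real.exp (β * f x) := by
      intro x
      have h1' := Real.add_one_le_exp (β * (f x - m))
      have : Real.exp (β * m) * Real.exp (β * (f x - m)) = Real.exp (β * f x) := by
        rw [← Real.exp_add]; ring_nf
      nlinarith [Real.exp_pos (β * m)]
    have iT : Integrable (fun x => Real.exp (β * m) * (1 + β * (f x - m))) μ :=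
      ((integrable_const (1:ℝ)).add (ig.const_mul β)).const_mul (Real.exp (β * m))
    have hmono := integral_mono iT iE hpt
    have hint : ∫ x, Real.exp (β * m) * (1 + β * (f x - m)) ∂μ = Real.exp (β * m) := by
      rw [integral_const_mul, integral_add (integrable_const 1) (ig.const_mul β),
        integral_const_mul, integral_sub iF (integrable_const m)]
      simp [← hm]
    linarith
  have hZpos : 0 < Z := lt_of_lt_of_le (Real.exp_pos _) hZlb
  -- step 1: thermalVar ≤ (∫ (f-m)² e^{βf}) / Z
  have key1 : thermalVar μ β f f ≤ (∫ x, (f x - m) ^ 2 * Real.exp (β * f x) ∂μ) / Z := by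
    have hexp : (∫ x, (f x - m) ^ 2 * Real.exp (β * f x) ∂μ)
        = (∫ x, f x ^ 2 * Real.exp (β * f x) ∂μ)
          - 2 * m * (∫ x, f x * Real.exp (β * f x) ∂μ) + m ^ 2 * Z := by
      have hcong : ∀ x, (f x - m) ^ 2 * Real.exp (β * f x)
          = f x ^ 2 * Real.exp (β * f x) - 2 * m * (f x * Real.exp (β * f x))
            + m ^ 2 * Real.exp (β * f x) := fun x => by ring
      rw [integral_congr_ae (Filter.Eventually.of_forall hcong),
        integral_add (f := fun x => f x ^ 2 * Real.exp (β * f x)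
            - 2 * m * (f x * Real.exp (β * f x)))
          (g := fun x => m ^ 2 * Real.exp (β * f x))
          (if2E.sub (ifE.const_mul _)) (iE.const_mul _),
        integral_sub if2E (ifE.const_mul _), integral_const_mul, integral_const_mul]
    unfold thermalVar thermalExp
    rw [← hZdef, hexp]
    set B : ℝ := ∫ x, f x * Real.exp (β * f x) ∂μ
    set A : ℝ := ∫ x, f x ^ 2 * Real.exp (β * f x) ∂μ
    have hZne : Z ≠ 0 := ne_of_gt hZpos
    have expand : (A - 2 * m * B + m ^ 2 * Z) / Z - (A / Z - (B / Z) ^ 2)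
        = (B / Z - m) ^ 2 := by field_simp; ring
    nlinarith [sq_nonneg (B / Z - m)]
  -- step 2: bound the numerator
  have key2 : (∫ x, (f x - m) ^ 2 * Real.exp (β * f x) ∂μ)
      ≤ Real.exp (β * m) * Real.exp β * ∫ x, (f x - m) ^ 2 ∂μ := by
    have hpt : ∀ x, (f x - m) ^ 2 * Real.exp (β * f x)
        ≤ Real.exp (β * m) * Real.exp β * (f x - m) ^ 2 := by
      intro x
      have hE : Real.exp (β * f x) ≤ Real.exp (β * m) * Real.exp β := by
        rw [← Real.exp_add]
        apply Real.exp_le_exp.2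
        have := h1 x
        nlinarith
      nlinarith [sq_nonneg (f x - m), hEpos x]
    calc (∫ x, (f x - m) ^ 2 * Real.exp (β * f x) ∂μ)
        ≤ ∫ x, Real.exp (β * m) * Real.exp β * (f x - m) ^ 2 ∂μ :=
          integral_mono ig2E (ig2.const_mul _) hpt
      _ = Real.exp (β * m) * Real.exp β * ∫ x, (f x - m) ^ 2 ∂μ := integral_const_mul _ _
  have hnum_nn : 0 ≤ ∫ x, (f x - m) ^ 2 * Real.exp (β * f x) ∂μ :=
    integral_nonneg fun x => mul_nonneg (sq_nonneg _) (le_of_lt (hEpos x))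
  calc thermalVar μ β f f ≤ (∫ x, (f x - m) ^ 2 * Real.exp (β * f x) ∂μ) / Z := key1
    _ ≤ (Real.exp (β * m) * Real.exp β * ∫ x, (f x - m) ^ 2 ∂μ) / Real.exp (β * m) := by
        apply div_le_div₀ (by positivity) key2 (Real.exp_pos _) hZlb
    _ = Real.exp β * ∫ x, (f x - m) ^ 2 ∂μ := by
        field_simp
end
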